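/- Every bad normalized fully ternary string s of length n has flip grouping distance d_g(s) = n − 2. -/

import Mathlib

/-- Prefix reversal (flip) of the first `i` symbols of `s`. -/
def pflip (i : ℕ) (s : List ℕ) : List ℕ := (s.take i).reverse ++ s.drop i

/-- One flip step: `t` is obtained from `s` by some flip `f^(i)` with `1 ≤ i ≤ |s|`. -/
def FlipStep (s t : List ℕ) : Prop := ∃ i, 1 ≤ i ∧ i ≤ s.length ∧ t = pflip i s

/-- `ReachIn m s t`: `t` can be obtained from `s` by exactly `m` flips. -/
def ReachIn : ℕ → List ℕ → List ℕ → Prop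
  | 0 => fun s t => s = t
  | (m+1) => fun s t => ∃ u, FlipStep s u ∧ ReachIn m u t

/-- Flip distance: minimum number of flips transforming `s` into `t`. -/
noncomputable def flipDist (s t : List ℕ) : ℕ := sInf {m | ReachIn m s t}

/-- Two strings are compatible if every symbol occurs equally often in both. -/
def Compatible (s t : List ℕ) : Prop := ∀ a, s.count a = t.count a

/-- A string is fully `k`-ary if the set of symbols occurring in it is exactly `{0,…,k-1}`. -/
def FullyKary (k : ℕ) (s : List ℕ) : Prop := ∀ a, a ∈ s ↔ a < k

/-- A string is normalized if no two adjacent symbols are equal. -/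
def Normalized (s : List ℕ) : Prop := s.Chain' (· ≠ ·)

/-- A string is grouped if the occurrences of each symbol are consecutive. -/
def Grouped (s : List ℕ) : Prop :=
  ∀ i j l : Fin s.length, i < j → j < l → s.get i = s.get l → s.get j = s.get i

/-- Flip grouping distance: minimum number of flips transforming `s` into some grouped string. -/
noncomputable def groupDist (s : List ℕ) : ℕ := sInf {m | ∃ t, Grouped t ∧ ReachIn m s t}

/-- Flip sorting distance: flip distance from `s` to its non-descending rearrangement `I(s)`. -/
noncomputable def sortDist (s : List ℕ) : ℕ := flipDist s (s.insertionSort (· ≤ ·))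

/-- `rep w m` is the concatenation of `m` copies of the string `w`. -/
def rep (w : List ℕ) (m : ℕ) : List ℕ := (List.replicate m w).flatten

/-- Generic base forms (types I--IV) of bad ternary strings, before relabeling. -/
def GBaseForm (s : List ℕ) : Prop :=
  -- type I: 0(12)^{≥2} and 02(12)^+
  (∃ j, 2 ≤ j ∧ s = 0 :: rep [1,2] j) ∨
  (∃ j, 1 ≤ j ∧ s = 0 :: 2 :: rep [1,2] j) ∨
  -- type II: ({0,1}2)^+ and (2{0,1})^+2
  (∃ xs : List ℕ, xs ≠ [] ∧ (∀ x ∈ xs, x = 0 ∨ x = 1) ∧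
    s = (xs.map (fun x => [x,2])).flatten) ∨
  (∃ xs : List ℕ, xs ≠ [] ∧ (∀ x ∈ xs, x = 0 ∨ x = 1) ∧
    s = (xs.map (fun x => [2,x])).flatten ++ [2]) ∨
  -- type III: 0(21)^+02(12)^*
  (∃ i j, 1 ≤ i ∧ s = 0 :: (rep [2,1] i ++ 0 :: 2 :: rep [1,2] j)) ∨
  -- type IV: eight exceptional strings
  s = [2,1,0,2,1,2] ∨ s = [0,2,1,0,1,2] ∨ s = [0,1,2,0,2,1,2] ∨ s = [1,2,0,1,2,1,2] ∨
  s = [0,2,1,0,1,2,1,2] ∨ s = [2,0,2,1,0,2,1,2] ∨ s = [0,2,0,2,1,0,2,1,2] ∨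
  s = [1,2,0,1,2,0,2,1,2]

/-- A normalized fully ternary string is bad if some bijective relabeling of `{0,1,2}`
turns it into one of the base forms. -/
def BadTernary (s : List ℕ) : Prop :=
  ∃ f : ℕ → ℕ, Set.BijOn f {x | x < 3} {x | x < 3} ∧ GBaseForm (s.map f)


/-! ### Auxiliary development -/

/-- Collapse maximal runs of equal symbols to a single symbol. -/
def nrm : List ℕ → List ℕ
  | [] => []
  | [a] => [a]
  | a :: b :: t => if a = b then nrm (b :: t) else a :: nrm (b :: t)

@[simp] lemma nrm_nil : nrm [] = [] := rfl
@[simp] lemma nrm_single (a : ℕ) : nrm [a] = [a] := rfl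

lemma nrm_cons_cons (a b : ℕ) (t : List ℕ) :
    nrm (a :: b :: t) = if a = b then nrm (b :: t) else a :: nrm (b :: t) := rfl

lemma nrm_ne_nil {l : List ℕ} (h : l ≠ []) : nrm l ≠ [] := by
  induction l with
  | nil => simp at h
  | cons a t ih =>
    cases t with
    | nil => simp [nrm]
    | cons b t' =>
      rw [nrm_cons_cons]
      split
      · exact ih (by simp)
      · simp

lemma head?_nrm (l : List ℕ) : (nrm l).head? = l.head? := by
  induction l with
  | nil => rfl
  | cons a t ih =>
    cases t with
    | nil => rfl
    | cons b t' =>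
      rw [nrm_cons_cons]
      split
      · rename_i h; rw [ih]; simp [h]
      · simp

lemma mem_nrm {x : ℕ} {l : List ℕ} : x ∈ nrm l ↔ x ∈ l := by
  induction l with
  | nil => simp
  | cons a t ih =>
    cases t with
    | nil => simp
    | cons b t' =>
      rw [nrm_cons_cons]
      split
      · rename_i h; subst h; rw [ih]
        constructor
        · intro hm; exact List.mem_cons_of_mem _ hm
        · intro hm
          rcases List.mem_cons.1 hm with h1 | h1
          · subst h1; exact List.mem_cons_self
          · exact h1
      · simp [ih]

lemma nrm_sublist (l : List ℕ) : (nrm l).Sublist l := by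
  induction l with
  | nil => simp
  | cons a t ih =>
    cases t with
    | nil => simp
    | cons b t' =>
      rw [nrm_cons_cons]
      split
      · exact ih.cons _
      · exact ih.cons₂ _

lemma chain'_nrm (l : List ℕ) : (nrm l).Chain' (· ≠ ·) := by
  induction l with
  | nil => exact List.isChain_nil
  | cons a t ih =>
    cases t with
    | nil => exact List.isChain_singleton _
    | cons b t' =>
      rw [nrm_cons_cons]
      split
      · exact ih
      · rename_i h
        unfold List.Chain'; rw [List.isChain_cons]
        refine ⟨?_, ih⟩
        intro y hy
        rw [head?_nrm] at hy
        simp at hy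
        subst hy
        exact h

lemma nrm_of_chain' {l : List ℕ} (h : l.Chain' (· ≠ ·)) : nrm l = l := by
  induction l with
  | nil => rfl
  | cons a t ih =>
    cases t with
    | nil => rfl
    | cons b t' =>
      unfold List.Chain' at h; rw [List.isChain_cons_cons] at h
      rw [nrm_cons_cons, if_neg h.1, ih h.2]

lemma nrm_replicate {k : ℕ} (hk : 1 ≤ k) (a : ℕ) : nrm (List.replicate k a) = [a] := by
  induction k with
  | zero => omega
  | succ n ih =>
    rcases Nat.eq_or_lt_of_le hk with h | h
    · simp [← h]
    · have hn : 1 ≤ n := by omega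
      rw [List.replicate_succ]
      cases hn' : List.replicate n a with
      | nil =>
        exfalso
        have := congrArg List.length hn'
        simp at this
        omega
      | cons c t =>
        have hc : c = a := by
          have hm : c ∈ List.replicate n a := by rw [hn']; simp
          exact List.eq_of_mem_replicate hm
        rw [hn'] at ih
        rw [nrm_cons_cons, if_pos hc.symm, ih hn]

/-- splitting nrm over an append with distinct boundary symbols -/
lemma nrm_append_ne {x y : List ℕ} (hx : x ≠ []) (hy : y ≠ [])
    (h : x.getLast hx ≠ y.head hy) : nrm (x ++ y) = nrm x ++ nrm y := by
  induction x with
  | nil => simp at hx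
  | cons a t ih =>
    cases t with
    | nil =>
      cases y with
      | nil => simp at hy
      | cons c y' =>
        simp only [List.getLast_singleton, List.head_cons] at h
        simp only [List.singleton_append, nrm_single]
        rw [nrm_cons_cons, if_neg h]
    | cons b t' =>
      have hlast : (b :: t').getLast (by simp) ≠ y.head hy := by
        rwa [List.getLast_cons (by simp)] at h
      have := ih (by simp) hlast
      simp only [List.cons_append] at this ⊢
      rw [nrm_cons_cons, nrm_cons_cons, this]
      split <;> simp

lemma nrm_eq_head_cons_tail {y : List ℕ} (hy : y ≠ []) :
    nrm y = y.head hy :: (nrm y).tail := by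
  have h1 : (nrm y).head? = y.head? := head?_nrm y
  have h2 : nrm y ≠ [] := nrm_ne_nil hy
  cases hn : nrm y with
  | nil => exact absurd hn h2
  | cons c t =>
    rw [hn] at h1
    simp only [List.head?_cons] at h1
    rw [List.head?_eq_head hy] at h1
    have : c = y.head hy := Option.some.inj h1
    simp [this]

/-- splitting nrm over an append with equal boundary symbols -/
lemma nrm_append_eq {x y : List ℕ} (hx : x ≠ []) (hy : y ≠ [])
    (h : x.getLast hx = y.head hy) : nrm (x ++ y) = nrm x ++ (nrm y).tail := by
  induction x with
  | nil => simp at hx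
  | cons a t ih =>
    cases t with
    | nil =>
      cases y with
      | nil => simp at hy
      | cons c y' =>
        simp only [List.getLast_singleton, List.head_cons] at h
        simp only [List.singleton_append, nrm_single]
        rw [nrm_cons_cons, if_pos h]
        subst h
        exact nrm_eq_head_cons_tail (by simp)
    | cons b t' =>
      have hlast : (b :: t').getLast (by simp) = y.head hy := by
        rwa [List.getLast_cons (by simp)] at h
      have := ih (by simp) hlast
      simp only [List.cons_append] at this ⊢
      rw [nrm_cons_cons, nrm_cons_cons, this]
      split <;> simp

lemma nrm_reverse (l : List ℕ) : nrm l.reverse = (nrm l).reverse := by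
  induction l with
  | nil => rfl
  | cons a t ih =>
    cases t with
    | nil => rfl
    | cons b t' =>
      have hbt : (b :: t').reverse ≠ [] := by simp
      have hlast : ((b :: t').reverse).getLast hbt = b := by
        rw [List.getLast_reverse]; rfl
      have key : (a :: b :: t').reverse = (b :: t').reverse ++ [a] :=
        List.reverse_cons
      rw [key, nrm_cons_cons]
      by_cases hab : a = b
      · rw [if_pos hab]
        have hb : ((b :: t').reverse).getLast hbt = [a].head (by simp) := by
          rw [hlast]; simp [hab]
        rw [nrm_append_eq hbt (by simp) hb, ih]
        simp
      · rw [if_neg hab]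
        have hb : ((b :: t').reverse).getLast hbt ≠ [a].head (by simp) := by
          rw [hlast]; simp; intro hc; exact hab hc.symm
        rw [nrm_append_ne hbt (by simp) hb, ih]
        simp

lemma getLast?_nrm (l : List ℕ) : (nrm l).getLast? = l.getLast? := by
  have h1 := head?_nrm l.reverse
  rw [nrm_reverse, List.head?_reverse, List.head?_reverse] at h1
  exact h1


/-- Number of blocks of a string. -/
def nb (s : List ℕ) : ℕ := (nrm s).length

lemma nb_pos {s : List ℕ} (h : s ≠ []) : 1 ≤ nb s := by
  unfold nb
  have := nrm_ne_nil h
  cases hn : nrm s with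
  | nil => exact absurd hn this
  | cons a t => simp

lemma one_le_of_mem_ne {s : List ℕ} {a b : ℕ} (ha : a ∈ s) (hb : b ∈ s) (hab : a ≠ b) :
    2 ≤ nb s := by
  unfold nb
  have ha' : a ∈ nrm s := mem_nrm.2 ha
  have hb' : b ∈ nrm s := mem_nrm.2 hb
  cases hn : nrm s with
  | nil => rw [hn] at ha'; simp at ha'
  | cons c t =>
    cases t with
    | nil =>
      rw [hn] at ha' hb'
      simp at ha' hb'
      exact absurd (ha'.trans hb'.symm) hab
    | cons d t' => simp

/-- A flip decreases the number of blocks by at most one. -/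
lemma nb_flipstep {s u : List ℕ} (h : FlipStep s u) : nb s ≤ nb u + 1 := by
  obtain ⟨i, hi1, hi2, rfl⟩ := h
  have hslen : s ≠ [] := by
    intro hc; subst hc; simp at hi2; omega
  set x := s.take i with hx
  set y := s.drop i with hy
  have hxne : x ≠ [] := by
    intro hc
    rcases List.take_eq_nil_iff.1 hc with hc | hc
    · omega
    · exact hslen hc
  have hsxy : s = x ++ y := (List.take_append_drop i s).symm
  by_cases hyne : y = []
  · -- full reversal
    have : pflip i s = x.reverse := by simp [pflip, ← hx, ← hy, hyne]
    rw [this]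
    have : nb x.reverse = nb x := by unfold nb; rw [nrm_reverse]; simp
    rw [this]
    have : nb s = nb x := by rw [hsxy, hyne]; simp
    omega
  · have hrne : x.reverse ≠ [] := by simp [hxne]
    have hlastrev : x.reverse.getLast hrne = x.head hxne := List.getLast_reverse _
    have hps : pflip i s = x.reverse ++ y := by simp [pflip, ← hx, ← hy]
    rw [hps]
    by_cases h1 : x.getLast hxne = y.head hyne
    · have hns : nrm s = nrm x ++ (nrm y).tail := by
        rw [hsxy]; exact nrm_append_eq hxne hyne h1
      have hbs : nb s = nb x + (nb y - 1) := by
        unfold nb; rw [hns]; simp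
      by_cases h2 : x.head hxne = y.head hyne
      · have hnu : nrm (x.reverse ++ y) = nrm x.reverse ++ (nrm y).tail :=
          nrm_append_eq hrne hyne (by rw [hlastrev]; exact h2)
        have : nb (x.reverse ++ y) = nb x + (nb y - 1) := by
          unfold nb; rw [hnu, nrm_reverse]; simp
        omega
      · have hnu : nrm (x.reverse ++ y) = nrm x.reverse ++ nrm y :=
          nrm_append_ne hrne hyne (by rw [hlastrev]; exact h2)
        have : nb (x.reverse ++ y) = nb x + nb y := by
          unfold nb; rw [hnu, nrm_reverse]; simp
        omega
    · have hns : nrm s = nrm x ++ nrm y := by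
        rw [hsxy]; exact nrm_append_ne hxne hyne h1
      have hbs : nb s = nb x + nb y := by unfold nb; rw [hns]; simp
      by_cases h2 : x.head hxne = y.head hyne
      · have hnu : nrm (x.reverse ++ y) = nrm x.reverse ++ (nrm y).tail :=
          nrm_append_eq hrne hyne (by rw [hlastrev]; exact h2)
        have : nb (x.reverse ++ y) = nb x + (nb y - 1) := by
          unfold nb; rw [hnu, nrm_reverse]; simp
        have := nb_pos hyne
        omega
      · have hnu : nrm (x.reverse ++ y) = nrm x.reverse ++ nrm y :=
          nrm_append_ne hrne hyne (by rw [hlastrev]; exact h2)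
        have : nb (x.reverse ++ y) = nb x + nb y := by
          unfold nb; rw [hnu, nrm_reverse]; simp
        omega

/-- Characterization of a block-merging flip. -/
lemma flip_merge {s u : List ℕ} (h : FlipStep s u) (hlt : nb u < nb s) :
    ∃ (X Y' : List ℕ) (a : ℕ), nrm s = X ++ a :: Y' ∧ X ≠ [] ∧ X.head? = some a ∧
      nrm u = X.reverse ++ Y' := by
  obtain ⟨i, hi1, hi2, rfl⟩ := h
  have hslen : s ≠ [] := by
    intro hc; subst hc; simp at hi2; omega
  set x := s.take i with hx
  set y := s.drop i with hy
  have hxne : x ≠ [] := by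
    intro hc
    rcases List.take_eq_nil_iff.1 hc with hc | hc
    · omega
    · exact hslen hc
  have hsxy : s = x ++ y := (List.take_append_drop i s).symm
  by_cases hyne : y = []
  · exfalso
    have : pflip i s = x.reverse := by simp [pflip, ← hx, ← hy, hyne]
    rw [this] at hlt
    have h1 : nb x.reverse = nb x := by unfold nb; rw [nrm_reverse]; simp
    have h2 : nb s = nb x := by rw [hsxy, hyne]; simp
    omega
  · have hrne : x.reverse ≠ [] := by simp [hxne]
    have hlastrev : x.reverse.getLast hrne = x.head hxne := List.getLast_reverse _
    have hps : pflip i s = x.reverse ++ y := by simp [pflip, ← hx, ← hy]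
    rw [hps] at hlt ⊢
    by_cases h2 : x.head hxne = y.head hyne
    · by_cases h1 : x.getLast hxne = y.head hyne
      · exfalso
        have hns : nrm s = nrm x ++ (nrm y).tail := by
          rw [hsxy]; exact nrm_append_eq hxne hyne h1
        have hnu : nrm (x.reverse ++ y) = nrm x.reverse ++ (nrm y).tail :=
          nrm_append_eq hrne hyne (by rw [hlastrev]; exact h2)
        have e1 : nb s = nb x + ((nrm y).tail).length := by unfold nb; rw [hns]; simp
        have e2 : nb (x.reverse ++ y) = nb x + ((nrm y).tail).length := by
          unfold nb; rw [hnu, nrm_reverse]; simp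
        omega
      · refine ⟨nrm x, (nrm y).tail, y.head hyne, ?_, nrm_ne_nil hxne, ?_, ?_⟩
        · rw [hsxy, nrm_append_ne hxne hyne h1, ← nrm_eq_head_cons_tail hyne]
        · rw [head?_nrm, List.head?_eq_head hxne, h2]
        · rw [nrm_append_eq hrne hyne (by rw [hlastrev]; exact h2), nrm_reverse]
    · exfalso
      by_cases h1 : x.getLast hxne = y.head hyne
      · have hns : nrm s = nrm x ++ (nrm y).tail := by
          rw [hsxy]; exact nrm_append_eq hxne hyne h1
        have hnu : nrm (x.reverse ++ y) = nrm x.reverse ++ nrm y :=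
          nrm_append_ne hrne hyne (by rw [hlastrev]; exact h2)
        have e1 : nb s = nb x + ((nrm y).tail).length := by unfold nb; rw [hns]; simp
        have e2 : nb (x.reverse ++ y) = nb x + nb y := by
          unfold nb; rw [hnu, nrm_reverse]; simp
        have : ((nrm y).tail).length ≤ nb y := by unfold nb; simp
        omega
      · have hns : nrm s = nrm x ++ nrm y := by
          rw [hsxy]; exact nrm_append_ne hxne hyne h1
        have hnu : nrm (x.reverse ++ y) = nrm x.reverse ++ nrm y :=
          nrm_append_ne hrne hyne (by rw [hlastrev]; exact h2)
        have e1 : nb s = nb x + nb y := by unfold nb; rw [hns]; simp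
        have e2 : nb (x.reverse ++ y) = nb x + nb y := by
          unfold nb; rw [hnu, nrm_reverse]; simp
        omega

lemma flip_perm {s u : List ℕ} (h : FlipStep s u) : s.Perm u := by
  obtain ⟨i, _, _, rfl⟩ := h
  have h1 : ((s.take i).reverse ++ s.drop i).Perm (s.take i ++ s.drop i) :=
    ((s.take i).reverse_perm).append_right _
  rw [List.take_append_drop] at h1
  exact h1.symm

lemma reach_perm {m : ℕ} {s t : List ℕ} (h : ReachIn m s t) : s.Perm t := by
  induction m generalizing s with
  | zero => rw [h]
  | succ k ih =>
    obtain ⟨u, hu, hr⟩ := h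
    exact (flip_perm hu).trans (ih hr)

lemma reach_trans {m k : ℕ} {s u t : List ℕ} (h1 : ReachIn m s u) (h2 : ReachIn k u t) :
    ReachIn (m + k) s t := by
  induction m generalizing s with
  | zero => rw [Nat.zero_add]; rw [h1]; exact h2
  | succ j ih =>
    obtain ⟨w, hw, hr⟩ := h1
    have he : j + 1 + k = (j + k) + 1 := by omega
    rw [he]
    exact ⟨w, hw, ih hr⟩

/-- Each flip decreases the block count by at most one. -/
lemma nb_reach {m : ℕ} {s t : List ℕ} (h : ReachIn m s t) : nb s ≤ m + nb t := by
  induction m generalizing s with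
  | zero => rw [h]; omega
  | succ k ih =>
    obtain ⟨u, hu, hr⟩ := h
    have := nb_flipstep hu
    have := ih hr
    omega

/-- Flipping a prefix of an append only touches the left part. -/
lemma reach_append {m : ℕ} {s t : List ℕ} (w : List ℕ) (h : ReachIn m s t) :
    ReachIn m (s ++ w) (t ++ w) := by
  induction m generalizing s with
  | zero => rw [h]; rfl
  | succ k ih =>
    obtain ⟨u, hu, hr⟩ := h
    obtain ⟨i, hi1, hi2, rfl⟩ := hu
    refine ⟨pflip i s ++ w, ⟨i, hi1, by simp; omega, ?_⟩, ih hr⟩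
    unfold pflip
    rw [List.take_append_of_le_length hi2, List.drop_append_of_le_length hi2]
    simp

lemma not_grouped_of_vwv {s : List ℕ} {v w : ℕ} (hvw : v ≠ w)
    (h : [v, w, v].Sublist s) : ¬ Grouped s := by
  intro hg
  obtain ⟨is, his, hp⟩ := List.sublist_eq_map_getElem h
  have hlen : is.length = 3 := by
    have := congrArg List.length his
    simpa using this.symm
  rcases is with _ | ⟨i, _ | ⟨j, _ | ⟨l, rest⟩⟩⟩ <;> simp at hlen
  subst hlen
  simp only [List.map_cons, List.map_nil, List.cons.injEq, and_true] at his
  obtain ⟨h1, h2, h3⟩ := his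
  rcases hp with _ | ⟨ha, hp2⟩
  rcases hp2 with _ | ⟨hb, -⟩
  have hij : i < j := ha j (by simp)
  have hjl : j < l := hb l (by simp)
  have key := hg i j l hij hjl (by show s[i] = s[l]; rw [← h1, ← h3])
  apply hvw
  rw [h1, h2]; exact key.symm

lemma dup_vwv {l : List ℕ} {v : ℕ} (hd : [v, v].Sublist l) (hc : l.Chain' (· ≠ ·)) :
    ∃ w, w ≠ v ∧ [v, w, v].Sublist l := by
  induction l with
  | nil => simp at hd
  | cons c l' ih =>
    rcases List.sublist_cons_iff.1 hd with hd' | ⟨r, hr, hrs⟩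
    · obtain ⟨w, hw, hs⟩ := ih hd' hc.tail
      exact ⟨w, hw, hs.cons c⟩
    · obtain ⟨hcv, hvr⟩ : v = c ∧ [v] = r := by
        rw [List.cons.injEq] at hr; exact hr
      rw [← hvr] at hrs
      cases l' with
      | nil => exact absurd (List.singleton_sublist.1 hrs) List.not_mem_nil
      | cons d l'' =>
        have hvl' : v ∈ d :: l'' := List.singleton_sublist.1 hrs
        have hvd : v ≠ d := by rw [hcv]; exact (List.isChain_cons_cons.1 hc).1
        have hvl'' : v ∈ l'' := by
          rcases List.mem_cons.1 hvl' with h | h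
          · exact absurd h hvd
          · exact h
        refine ⟨d, fun h => hvd h.symm, ?_⟩
        have hsub : [v, d, v].Sublist (v :: d :: l'') :=
          ((List.singleton_sublist.2 hvl'').cons₂ d).cons₂ v
        have he : v :: d :: l'' = c :: d :: l'' := by rw [hcv]
        rwa [he] at hsub

lemma grouped_nodup_nrm {s : List ℕ} (hg : Grouped s) : (nrm s).Nodup := by
  by_contra hnd
  obtain ⟨x, hx⟩ := List.exists_duplicate_iff_not_nodup.2 hnd
  have hs : [x, x].Sublist (nrm s) := List.duplicate_iff_sublist.1 hx
  obtain ⟨w, hw, hsub⟩ := dup_vwv hs (chain'_nrm s)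
  exact not_grouped_of_vwv (fun h => hw h.symm) (hsub.trans (nrm_sublist s)) hg

lemma nb_grouped_le {g : List ℕ} (hg : Grouped g) (h3 : ∀ x ∈ g, x < 3) : nb g ≤ 3 := by
  have hnd : (nrm g).Nodup := grouped_nodup_nrm hg
  have hsub : (nrm g).toFinset ⊆ ({0, 1, 2} : Finset ℕ) := by
    intro x hx
    simp only [List.mem_toFinset] at hx
    have := h3 x (mem_nrm.1 hx)
    simp; omega
  have := Finset.card_le_card hsub
  rw [List.toFinset_card_of_nodup hnd] at this
  simpa [nb] using this

/-! ### rep and pair-flatten helpers -/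

lemma rep_zero (w : List ℕ) : rep w 0 = [] := rfl

lemma rep_succ (w : List ℕ) (m : ℕ) : rep w (m+1) = w ++ rep w m := by
  unfold rep; rw [List.replicate_succ]; simp

lemma rep_succ' (w : List ℕ) (m : ℕ) : rep w (m+1) = rep w m ++ w := by
  unfold rep; rw [List.replicate_succ']; simp

lemma mem_rep {x : ℕ} {w : List ℕ} {m : ℕ} (h : x ∈ rep w m) : x ∈ w := by
  unfold rep at h
  rcases List.mem_flatten.1 h with ⟨u, hu, hx⟩
  rwa [List.eq_of_mem_replicate hu] at hx

lemma reverse_rep (a b : ℕ) (m : ℕ) : (rep [a,b] m).reverse = rep [b,a] m := by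
  induction m with
  | zero => rfl
  | succ k ih => rw [rep_succ, rep_succ']; simp [ih]

lemma map_rep (f : ℕ → ℕ) (w : List ℕ) (m : ℕ) : (rep w m).map f = rep (w.map f) m := by
  induction m with
  | zero => rfl
  | succ k ih => rw [rep_succ, rep_succ]; simp [ih]

/-- `(x₁2)(x₂2)…` -/
def F1 (xs : List ℕ) : List ℕ := (xs.map (fun x => [x,2])).flatten
/-- `(2x₁)(2x₂)…` -/
def F2 (xs : List ℕ) : List ℕ := (xs.map (fun x => [2,x])).flatten

@[simp] lemma F1_nil : F1 [] = [] := rfl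
@[simp] lemma F2_nil : F2 [] = [] := rfl
@[simp] lemma F1_cons (x : ℕ) (xs : List ℕ) : F1 (x :: xs) = x :: 2 :: F1 xs := rfl
@[simp] lemma F2_cons (x : ℕ) (xs : List ℕ) : F2 (x :: xs) = 2 :: x :: F2 xs := rfl

lemma F1_append (p q : List ℕ) : F1 (p ++ q) = F1 p ++ F1 q := by
  unfold F1; simp

lemma F2_append (p q : List ℕ) : F2 (p ++ q) = F2 p ++ F2 q := by
  unfold F2; simp

lemma F1_reverse (p : List ℕ) : (F1 p).reverse = F2 p.reverse := by
  induction p with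
  | nil => rfl
  | cons x xs ih =>
    have e1 : (F1 (x :: xs)).reverse = (F1 xs).reverse ++ [2, x] := by
      rw [F1_cons]; simp
    rw [e1, ih, List.reverse_cons, F2_append]
    rfl

lemma F2_reverse (p : List ℕ) : (F2 p).reverse = F1 p.reverse := by
  induction p with
  | nil => rfl
  | cons x xs ih =>
    have e1 : (F2 (x :: xs)).reverse = (F2 xs).reverse ++ [x, 2] := by
      rw [F2_cons]; simp
    rw [e1, ih, List.reverse_cons, F1_append]
    rfl

lemma two_cons_F1 (q : List ℕ) : 2 :: F1 q = F2 q ++ [2] := by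
  induction q with
  | nil => rfl
  | cons x xs ih => rw [F1_cons, F2_cons]; simp [ih]

lemma F1_replicate (m : ℕ) (c : ℕ) : F1 (List.replicate m c) = rep [c,2] m := by
  induction m with
  | zero => rfl
  | succ k ih => rw [List.replicate_succ, rep_succ, F1_cons, ih]; rfl

lemma unique_split {P Q X Y : List ℕ} {a : ℕ} (hP : a ∉ P) (hQ : a ∉ Q)
    (h : P ++ a :: Q = X ++ a :: Y) : X = P ∧ Y = Q := by
  induction P generalizing X with
  | nil =>
    cases X with
    | nil => simp at h; exact ⟨rfl, h.symm⟩
    | cons c X' =>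
      simp only [List.nil_append, List.cons_append, List.cons.injEq] at h
      exfalso
      apply hQ
      rw [h.2]
      exact List.mem_append_right _ (List.mem_cons_self)
  | cons p P' ih =>
    cases X with
    | nil =>
      simp only [List.cons_append, List.nil_append, List.cons.injEq] at h
      rw [h.1] at hP
      exact absurd (List.mem_cons_self) hP
    | cons c X' =>
      simp only [List.cons_append, List.cons.injEq] at h
      have hr := ih (fun hm => hP (List.mem_cons_of_mem _ hm)) h.2
      refine ⟨?_, hr.2⟩
      rw [← h.1, hr.1]

lemma split_F1 {xs X Y : List ℕ} {a : ℕ} (hxs : ∀ x ∈ xs, x = 0 ∨ x = 1)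
    (ha : a ≠ 2) (h : F1 xs = X ++ a :: Y) :
    ∃ p q, xs = p ++ a :: q ∧ X = F1 p ∧ Y = 2 :: F1 q := by
  induction xs generalizing X with
  | nil =>
    exfalso
    have := congrArg List.length h
    simp [F1] at this
  | cons x xs' ih =>
    rw [F1_cons] at h
    cases X with
    | nil =>
      simp only [List.nil_append] at h
      obtain ⟨h1, h2⟩ := List.cons.inj h
      exact ⟨[], xs', by rw [h1]; rfl, rfl, h2.symm⟩
    | cons c X' =>
      simp only [List.cons_append] at h
      obtain ⟨h1, h2⟩ := List.cons.inj h
      cases X' with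
      | nil =>
        exfalso
        simp only [List.nil_append] at h2
        obtain ⟨h3, _⟩ := List.cons.inj h2
        exact ha h3.symm
      | cons c' X'' =>
        simp only [List.cons_append] at h2
        obtain ⟨h3, h4⟩ := List.cons.inj h2
        obtain ⟨p, q, hp1, hp2, hp3⟩ := ih (fun y hy => hxs y (List.mem_cons_of_mem _ hy)) h4
        refine ⟨x :: p, q, by rw [hp1]; rfl, ?_, hp3⟩
        rw [F1_cons, ← h1, ← h3, hp2]

lemma split_F2 {xs X Y : List ℕ} (hxs : ∀ x ∈ xs, x = 0 ∨ x = 1)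
    (h : F2 xs ++ [2] = X ++ 2 :: Y) :
    ∃ p q, xs = p ++ q ∧ X = F2 p ∧ Y = F1 q := by
  induction xs generalizing X with
  | nil =>
    rw [F2_nil, List.nil_append] at h
    cases X with
    | nil =>
      refine ⟨[], [], rfl, rfl, ?_⟩
      have := (List.cons.inj h).2
      simp [F1, this.symm]
    | cons c X' =>
      exfalso
      have := congrArg List.length h
      simp at this
  | cons x xs' ih =>
    rw [F2_cons] at h
    cases X with
    | nil =>
      rw [List.nil_append] at h
      have h2 := (List.cons.inj h).2
      refine ⟨[], x :: xs', rfl, rfl, ?_⟩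
      rw [F1_cons, two_cons_F1, ← h2]
      rfl
    | cons c X' =>
      simp only [List.cons_append] at h
      obtain ⟨h1, h2⟩ := List.cons.inj h
      cases X' with
      | nil =>
        exfalso
        rw [List.nil_append] at h2
        have h3 := (List.cons.inj h2).1
        rcases hxs x (List.mem_cons_self) with hh | hh <;> omega
      | cons c' X'' =>
        simp only [List.cons_append] at h2
        obtain ⟨h3, h4⟩ := List.cons.inj h2
        have h4' : F2 xs' ++ [2] = X'' ++ 2 :: Y := by
          simpa using h4
        obtain ⟨p, q, hp1, hp2, hp3⟩ := ih (fun y hy => hxs y (List.mem_cons_of_mem _ hy)) h4'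
        refine ⟨x :: p, q, by rw [hp1]; rfl, ?_, hp3⟩
        rw [F2_cons, ← h1, ← h3, hp2]

/-! ### relabeling machinery and the core closure lemma -/

/-- swap of 0 and 1 -/
def sw01 : ℕ → ℕ := fun x => if x = 0 then 1 else if x = 1 then 0 else x

lemma bijOn_sw01 : Set.BijOn sw01 {x | x < 3} {x | x < 3} := by
  refine ⟨?_, ?_, ?_⟩
  · intro x hx
    simp only [Set.mem_setOf_eq] at *
    unfold sw01
    split <;> try omega
    split <;> omega
  · intro x hx y hy hxy
    simp only [Set.mem_setOf_eq] at hx hy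
    unfold sw01 at hxy
    interval_cases x <;> interval_cases y <;> simp_all
  · intro x hx
    simp only [Set.mem_setOf_eq] at hx
    interval_cases x
    · exact ⟨1, by simp, by simp [sw01]⟩
    · exact ⟨0, by simp, by simp [sw01]⟩
    · exact ⟨2, by simp, by simp [sw01]⟩

lemma gbaseform_badternary {u : List ℕ} (h : GBaseForm u) : BadTernary u :=
  ⟨id, Set.bijOn_id _, by simpa using h⟩

lemma badternary_of_map_sw01 {u : List ℕ} (h : GBaseForm (u.map sw01)) : BadTernary u :=
  ⟨sw01, bijOn_sw01, h⟩

/-- The core closure lemma: a block-merging flip of a base-form string yields a bad string. -/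
lemma core {B X Y' : List ℕ} {a : ℕ} (hgb : GBaseForm B) (hB : B = X ++ a :: Y')
    (hX : X ≠ []) (hh : X.head? = some a) : BadTernary (X.reverse ++ Y') := by
  obtain ⟨X₂, hX₂⟩ : ∃ X₂, X = a :: X₂ := by
    cases X with
    | nil => exact absurd rfl hX
    | cons c t =>
      simp only [List.head?_cons, Option.some.injEq] at hh
      exact ⟨t, by rw [hh]⟩
  rcases hgb with ⟨j, hj, hBf⟩ | ⟨j, hj, hBf⟩ | ⟨xs, hne, hxs, hBf⟩ | ⟨xs, hne, hxs, hBf⟩ |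
    ⟨i, j, hi, hBf⟩ | hBf | hBf | hBf | hBf | hBf | hBf | hBf | hBf
  · -- type I-a : no merge is possible
    exfalso
    have hE : 0 :: rep [1,2] j = a :: (X₂ ++ a :: Y') := by
      rw [← hBf, hB, hX₂, List.cons_append]
    obtain ⟨h0, hrest⟩ := List.cons.inj hE
    have hmem : a ∈ rep [1,2] j := by
      rw [hrest]
      exact List.mem_append_right _ (List.mem_cons_self)
    have := mem_rep hmem
    rw [← h0] at this
    simp at this
  · -- type I-b : no merge is possible
    exfalso
    have hE : 0 :: (2 :: rep [1,2] j) = a :: (X₂ ++ a :: Y') := by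
      rw [← hBf, hB, hX₂, List.cons_append]
    obtain ⟨h0, hrest⟩ := List.cons.inj hE
    have hmem : a ∈ 2 :: rep [1,2] j := by
      rw [hrest]
      exact List.mem_append_right _ (List.mem_cons_self)
    rcases List.mem_cons.1 hmem with h | h
    · omega
    · have := mem_rep h
      rw [← h0] at this
      simp at this
  · -- type II-a
    have hE : F1 xs = X ++ a :: Y' := by rw [← hB, hBf]; rfl
    have ha2 : a ≠ 2 := by
      cases xs with
      | nil => exact absurd rfl hne
      | cons x₁ xs₁ =>
        rw [F1_cons, hX₂, List.cons_append] at hE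
        have h1 := (List.cons.inj hE).1
        rcases hxs x₁ (List.mem_cons_self) with h | h <;> omega
    obtain ⟨p, q, hp1, hp2, hp3⟩ := split_F1 hxs ha2 hE
    have hpne : p ≠ [] := by
      intro hc
      rw [hc, F1_nil] at hp2
      exact hX hp2
    rw [hp2, hp3, F1_reverse, two_cons_F1, ← List.append_assoc, ← F2_append]
    apply gbaseform_badternary
    right; right; right; left
    refine ⟨p.reverse ++ q, by simp [hpne], ?_, rfl⟩
    intro x hx
    apply hxs
    rw [hp1]
    rcases List.mem_append.1 hx with h | h
    · exact List.mem_append_left _ (List.mem_reverse.1 h)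
    · exact List.mem_append_right _ (List.mem_cons_of_mem _ h)
  · -- type II-b
    have hE : F2 xs ++ [2] = X ++ a :: Y' := by rw [← hB, hBf]; rfl
    have ha2 : a = 2 := by
      cases xs with
      | nil => exact absurd rfl hne
      | cons x₁ xs₁ =>
        rw [F2_cons, hX₂, List.cons_append, List.cons_append] at hE
        exact ((List.cons.inj hE).1).symm
    rw [ha2] at hE
    obtain ⟨p, q, hp1, hp2, hp3⟩ := split_F2 hxs hE
    have hpne : p ≠ [] := by
      intro hc
      rw [hc, F2_nil] at hp2
      exact hX hp2
    rw [hp2, hp3, F2_reverse, ← F1_append]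
    apply gbaseform_badternary
    right; right; left
    refine ⟨p.reverse ++ q, by simp [hpne], ?_, rfl⟩
    intro x hx
    apply hxs
    rw [hp1]
    rcases List.mem_append.1 hx with h | h
    · exact List.mem_append_left _ (List.mem_reverse.1 h)
    · exact List.mem_append_right _ h
  · -- type III
    have hE : 0 :: (rep [2,1] i ++ 0 :: 2 :: rep [1,2] j) = a :: (X₂ ++ a :: Y') := by
      rw [← hBf, hB, hX₂, List.cons_append]
    obtain ⟨h0, hrest⟩ := List.cons.inj hE
    rw [← h0] at hrest
    have hP : (0:ℕ) ∉ rep [2,1] i := by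
      intro h
      have := mem_rep h
      simp at this
    have hQ : (0:ℕ) ∉ 2 :: rep [1,2] j := by
      intro h
      rcases List.mem_cons.1 h with h | h
      · omega
      · have := mem_rep h
        simp at this
    obtain ⟨hXv, hYv⟩ := unique_split hP hQ hrest
    rw [hX₂, ← h0, hXv, hYv]
    have hrev : (0 :: rep [2,1] i).reverse = rep [1,2] i ++ [0] := by
      rw [List.reverse_cons, reverse_rep]
    rw [hrev, List.append_assoc]
    apply badternary_of_map_sw01
    have hmap : (rep [1,2] i ++ ([0] ++ (2 :: rep [1,2] j))).map sw01
        = rep [0,2] i ++ 1 :: 2 :: rep [0,2] j := by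
      simp only [List.map_append, List.map_cons, List.map_nil, map_rep]
      norm_num [sw01]
    rw [hmap]
    right; right; left
    refine ⟨List.replicate i 0 ++ 1 :: List.replicate j 0, by simp, ?_, ?_⟩
    · intro x hx
      rcases List.mem_append.1 hx with h | h
      · exact Or.inl (List.eq_of_mem_replicate h)
      · rcases List.mem_cons.1 h with h | h
        · exact Or.inr h
        · exact Or.inl (List.eq_of_mem_replicate h)
    · have : F1 (List.replicate i 0 ++ 1 :: List.replicate j 0)
          = rep [0,2] i ++ 1 :: 2 :: rep [0,2] j := by
        rw [F1_append, F1_replicate, F1_cons, F1_replicate]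
      rw [← this]
      rfl
  · -- B = [2, 1, 0, 2, 1, 2]
    rw [hBf] at hB
    have hXv : X = List.take X.length [2, 1, 0, 2, 1, 2] := by rw [hB, List.take_left]
    have hYv : a :: Y' = List.drop X.length [2, 1, 0, 2, 1, 2] := by rw [hB, List.drop_left]
    have hbound : X.length + (Y'.length + 1) = 6 := by
      have := congrArg List.length hB
      simp at this
      omega
    have h1 : 1 ≤ X.length := by
      cases X with
      | nil => exact absurd rfl hX
      | cons c t => simp
    set k := X.length with hk
    have h6 : k ≤ 5 := by omega
    interval_cases k
    · -- k = 1
      simp at hXv hYv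
      rw [hXv] at hh
      simp at hh
      obtain ⟨ha, hY⟩ := hYv
      omega
    · -- k = 2
      simp at hXv hYv
      rw [hXv] at hh
      simp at hh
      obtain ⟨ha, hY⟩ := hYv
      omega
    · -- k = 3
      simp at hXv hYv
      rw [hXv] at hh
      simp at hh
      obtain ⟨ha, hY⟩ := hYv
      subst hY
      rw [hXv]
      apply gbaseform_badternary
      left
      exact ⟨2, by norm_num, by decide⟩
    · -- k = 4
      simp at hXv hYv
      rw [hXv] at hh
      simp at hh
      obtain ⟨ha, hY⟩ := hYv
      omega
    · -- k = 5
      simp at hXv hYv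
      rw [hXv] at hh
      simp at hh
      obtain ⟨ha, hY⟩ := hYv
      subst hY
      rw [hXv]
      apply badternary_of_map_sw01
      right;right;right;right; left
      exact ⟨1, 0, by norm_num, by decide⟩
  · -- B = [0, 2, 1, 0, 1, 2]
    rw [hBf] at hB
    have hXv : X = List.take X.length [0, 2, 1, 0, 1, 2] := by rw [hB, List.take_left]
    have hYv : a :: Y' = List.drop X.length [0, 2, 1, 0, 1, 2] := by rw [hB, List.drop_left]
    have hbound : X.length + (Y'.length + 1) = 6 := by
      have := congrArg List.length hB
      simp at this
      omega
    have h1 : 1 ≤ X.length := by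
      cases X with
      | nil => exact absurd rfl hX
      | cons c t => simp
    set k := X.length with hk
    have h6 : k ≤ 5 := by omega
    interval_cases k
    · -- k = 1
      simp at hXv hYv
      rw [hXv] at hh
      simp at hh
      obtain ⟨ha, hY⟩ := hYv
      omega
    · -- k = 2
      simp at hXv hYv
      rw [hXv] at hh
      simp at hh
      obtain ⟨ha, hY⟩ := hYv
      omega
    · -- k = 3
      simp at hXv hYv
      rw [hXv] at hh
      simp at hh
      obtain ⟨ha, hY⟩ := hYv
      subst hY
      rw [hXv]
      apply badternary_of_map_sw01
      right;right;right;right; left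
      exact ⟨1, 0, by norm_num, by decide⟩
    · -- k = 4
      simp at hXv hYv
      rw [hXv] at hh
      simp at hh
      obtain ⟨ha, hY⟩ := hYv
      omega
    · -- k = 5
      simp at hXv hYv
      rw [hXv] at hh
      simp at hh
      obtain ⟨ha, hY⟩ := hYv
      omega
  · -- B = [0, 1, 2, 0, 2, 1, 2]
    rw [hBf] at hB
    have hXv : X = List.take X.length [0, 1, 2, 0, 2, 1, 2] := by rw [hB, List.take_left]
    have hYv : a :: Y' = List.drop X.length [0, 1, 2, 0, 2, 1, 2] := by rw [hB, List.drop_left]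
    have hbound : X.length + (Y'.length + 1) = 7 := by
      have := congrArg List.length hB
      simp at this
      omega
    have h1 : 1 ≤ X.length := by
      cases X with
      | nil => exact absurd rfl hX
      | cons c t => simp
    set k := X.length with hk
    have h6 : k ≤ 6 := by omega
    interval_cases k
    · -- k = 1
      simp at hXv hYv
      rw [hXv] at hh
      simp at hh
      obtain ⟨ha, hY⟩ := hYv
      omega
    · -- k = 2
      simp at hXv hYv
      rw [hXv] at hh
      simp at hh
      obtain ⟨ha, hY⟩ := hYv
      omega
    · -- k = 3
      simp at hXv hYv
      rw [hXv] at hh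
      simp at hh
      obtain ⟨ha, hY⟩ := hYv
      subst hY
      rw [hXv]
      apply gbaseform_badternary
      right;right;right;right;right; left
      exact (by decide)
    · -- k = 4
      simp at hXv hYv
      rw [hXv] at hh
      simp at hh
      obtain ⟨ha, hY⟩ := hYv
      omega
    · -- k = 5
      simp at hXv hYv
      rw [hXv] at hh
      simp at hh
      obtain ⟨ha, hY⟩ := hYv
      omega
    · -- k = 6
      simp at hXv hYv
      rw [hXv] at hh
      simp at hh
      obtain ⟨ha, hY⟩ := hYv
      omega
  · -- B = [1, 2, 0, 1, 2, 1, 2]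
    rw [hBf] at hB
    have hXv : X = List.take X.length [1, 2, 0, 1, 2, 1, 2] := by rw [hB, List.take_left]
    have hYv : a :: Y' = List.drop X.length [1, 2, 0, 1, 2, 1, 2] := by rw [hB, List.drop_left]
    have hbound : X.length + (Y'.length + 1) = 7 := by
      have := congrArg List.length hB
      simp at this
      omega
    have h1 : 1 ≤ X.length := by
      cases X with
      | nil => exact absurd rfl hX
      | cons c t => simp
    set k := X.length with hk
    have h6 : k ≤ 6 := by omega
    interval_cases k
    · -- k = 1
      simp at hXv hYv
      rw [hXv] at hh
      simp at hh
      obtain ⟨ha, hY⟩ := hYv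
      omega
    · -- k = 2
      simp at hXv hYv
      rw [hXv] at hh
      simp at hh
      obtain ⟨ha, hY⟩ := hYv
      omega
    · -- k = 3
      simp at hXv hYv
      rw [hXv] at hh
      simp at hh
      obtain ⟨ha, hY⟩ := hYv
      subst hY
      rw [hXv]
      apply gbaseform_badternary
      right; left
      exact ⟨2, by norm_num, by decide⟩
    · -- k = 4
      simp at hXv hYv
      rw [hXv] at hh
      simp at hh
      obtain ⟨ha, hY⟩ := hYv
      omega
    · -- k = 5
      simp at hXv hYv
      rw [hXv] at hh
      simp at hh
      obtain ⟨ha, hY⟩ := hYv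
      subst hY
      rw [hXv]
      apply gbaseform_badternary
      right;right;right;right;right; left
      exact (by decide)
    · -- k = 6
      simp at hXv hYv
      rw [hXv] at hh
      simp at hh
      obtain ⟨ha, hY⟩ := hYv
      omega
  · -- B = [0, 2, 1, 0, 1, 2, 1, 2]
    rw [hBf] at hB
    have hXv : X = List.take X.length [0, 2, 1, 0, 1, 2, 1, 2] := by rw [hB, List.take_left]
    have hYv : a :: Y' = List.drop X.length [0, 2, 1, 0, 1, 2, 1, 2] := by rw [hB, List.drop_left]
    have hbound : X.length + (Y'.length + 1) = 8 := by
      have := congrArg List.length hB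
      simp at this
      omega
    have h1 : 1 ≤ X.length := by
      cases X with
      | nil => exact absurd rfl hX
      | cons c t => simp
    set k := X.length with hk
    have h6 : k ≤ 7 := by omega
    interval_cases k
    · -- k = 1
      simp at hXv hYv
      rw [hXv] at hh
      simp at hh
      obtain ⟨ha, hY⟩ := hYv
      omega
    · -- k = 2
      simp at hXv hYv
      rw [hXv] at hh
      simp at hh
      obtain ⟨ha, hY⟩ := hYv
      omega
    · -- k = 3
      simp at hXv hYv
      rw [hXv] at hh
      simp at hh
      obtain ⟨ha, hY⟩ := hYv
      subst hY
      rw [hXv]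
      apply gbaseform_badternary
      right;right;right;right;right;right;right;right; left
      exact (by decide)
    · -- k = 4
      simp at hXv hYv
      rw [hXv] at hh
      simp at hh
      obtain ⟨ha, hY⟩ := hYv
      omega
    · -- k = 5
      simp at hXv hYv
      rw [hXv] at hh
      simp at hh
      obtain ⟨ha, hY⟩ := hYv
      omega
    · -- k = 6
      simp at hXv hYv
      rw [hXv] at hh
      simp at hh
      obtain ⟨ha, hY⟩ := hYv
      omega
    · -- k = 7
      simp at hXv hYv
      rw [hXv] at hh
      simp at hh
      obtain ⟨ha, hY⟩ := hYv
      omega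
  · -- B = [2, 0, 2, 1, 0, 2, 1, 2]
    rw [hBf] at hB
    have hXv : X = List.take X.length [2, 0, 2, 1, 0, 2, 1, 2] := by rw [hB, List.take_left]
    have hYv : a :: Y' = List.drop X.length [2, 0, 2, 1, 0, 2, 1, 2] := by rw [hB, List.drop_left]
    have hbound : X.length + (Y'.length + 1) = 8 := by
      have := congrArg List.length hB
      simp at this
      omega
    have h1 : 1 ≤ X.length := by
      cases X with
      | nil => exact absurd rfl hX
      | cons c t => simp
    set k := X.length with hk
    have h6 : k ≤ 7 := by omega
    interval_cases k
    · -- k = 1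
      simp at hXv hYv
      rw [hXv] at hh
      simp at hh
      obtain ⟨ha, hY⟩ := hYv
      omega
    · -- k = 2
      simp at hXv hYv
      rw [hXv] at hh
      simp at hh
      obtain ⟨ha, hY⟩ := hYv
      subst hY
      rw [hXv]
      apply gbaseform_badternary
      right;right;right;right; left
      exact ⟨1, 1, by norm_num, by decide⟩
    · -- k = 3
      simp at hXv hYv
      rw [hXv] at hh
      simp at hh
      obtain ⟨ha, hY⟩ := hYv
      omega
    · -- k = 4
      simp at hXv hYv
      rw [hXv] at hh
      simp at hh
      obtain ⟨ha, hY⟩ := hYv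
      omega
    · -- k = 5
      simp at hXv hYv
      rw [hXv] at hh
      simp at hh
      obtain ⟨ha, hY⟩ := hYv
      subst hY
      rw [hXv]
      apply gbaseform_badternary
      right;right;right;right;right;right;right; left
      exact (by decide)
    · -- k = 6
      simp at hXv hYv
      rw [hXv] at hh
      simp at hh
      obtain ⟨ha, hY⟩ := hYv
      omega
    · -- k = 7
      simp at hXv hYv
      rw [hXv] at hh
      simp at hh
      obtain ⟨ha, hY⟩ := hYv
      subst hY
      rw [hXv]
      apply badternary_of_map_sw01
      right;right;right;right; left
      exact ⟨1, 1, by norm_num, by decide⟩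
  · -- B = [0, 2, 0, 2, 1, 0, 2, 1, 2]
    rw [hBf] at hB
    have hXv : X = List.take X.length [0, 2, 0, 2, 1, 0, 2, 1, 2] := by rw [hB, List.take_left]
    have hYv : a :: Y' = List.drop X.length [0, 2, 0, 2, 1, 0, 2, 1, 2] := by rw [hB, List.drop_left]
    have hbound : X.length + (Y'.length + 1) = 9 := by
      have := congrArg List.length hB
      simp at this
      omega
    have h1 : 1 ≤ X.length := by
      cases X with
      | nil => exact absurd rfl hX
      | cons c t => simp
    set k := X.length with hk
    have h6 : k ≤ 8 := by omega
    interval_cases k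
    · -- k = 1
      simp at hXv hYv
      rw [hXv] at hh
      simp at hh
      obtain ⟨ha, hY⟩ := hYv
      omega
    · -- k = 2
      simp at hXv hYv
      rw [hXv] at hh
      simp at hh
      obtain ⟨ha, hY⟩ := hYv
      subst hY
      rw [hXv]
      apply gbaseform_badternary
      right;right;right;right;right;right;right;right;right;right; left
      exact (by decide)
    · -- k = 3
      simp at hXv hYv
      rw [hXv] at hh
      simp at hh
      obtain ⟨ha, hY⟩ := hYv
      omega
    · -- k = 4
      simp at hXv hYv
      rw [hXv] at hh
      simp at hh
      obtain ⟨ha, hY⟩ := hYv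
      omega
    · -- k = 5
      simp at hXv hYv
      rw [hXv] at hh
      simp at hh
      obtain ⟨ha, hY⟩ := hYv
      subst hY
      rw [hXv]
      apply gbaseform_badternary
      right;right; left
      exact ⟨[1,0,0,1], by decide, by decide, by decide⟩
    · -- k = 6
      simp at hXv hYv
      rw [hXv] at hh
      simp at hh
      obtain ⟨ha, hY⟩ := hYv
      omega
    · -- k = 7
      simp at hXv hYv
      rw [hXv] at hh
      simp at hh
      obtain ⟨ha, hY⟩ := hYv
      omega
    · -- k = 8
      simp at hXv hYv
      rw [hXv] at hh
      simp at hh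
      obtain ⟨ha, hY⟩ := hYv
      omega
  · -- B = [1, 2, 0, 1, 2, 0, 2, 1, 2]
    rw [hBf] at hB
    have hXv : X = List.take X.length [1, 2, 0, 1, 2, 0, 2, 1, 2] := by rw [hB, List.take_left]
    have hYv : a :: Y' = List.drop X.length [1, 2, 0, 1, 2, 0, 2, 1, 2] := by rw [hB, List.drop_left]
    have hbound : X.length + (Y'.length + 1) = 9 := by
      have := congrArg List.length hB
      simp at this
      omega
    have h1 : 1 ≤ X.length := by
      cases X with
      | nil => exact absurd rfl hX
      | cons c t => simp
    set k := X.length with hk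
    have h6 : k ≤ 8 := by omega
    interval_cases k
    · -- k = 1
      simp at hXv hYv
      rw [hXv] at hh
      simp at hh
      obtain ⟨ha, hY⟩ := hYv
      omega
    · -- k = 2
      simp at hXv hYv
      rw [hXv] at hh
      simp at hh
      obtain ⟨ha, hY⟩ := hYv
      omega
    · -- k = 3
      simp at hXv hYv
      rw [hXv] at hh
      simp at hh
      obtain ⟨ha, hY⟩ := hYv
      subst hY
      rw [hXv]
      apply gbaseform_badternary
      right;right; left
      exact ⟨[0,1,0,1], by decide, by decide, by decide⟩
    · -- k = 4
      simp at hXv hYv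
      rw [hXv] at hh
      simp at hh
      obtain ⟨ha, hY⟩ := hYv
      omega
    · -- k = 5
      simp at hXv hYv
      rw [hXv] at hh
      simp at hh
      obtain ⟨ha, hY⟩ := hYv
      omega
    · -- k = 6
      simp at hXv hYv
      rw [hXv] at hh
      simp at hh
      obtain ⟨ha, hY⟩ := hYv
      omega
    · -- k = 7
      simp at hXv hYv
      rw [hXv] at hh
      simp at hh
      obtain ⟨ha, hY⟩ := hYv
      subst hY
      rw [hXv]
      apply gbaseform_badternary
      right;right;right;right;right;right;right;right;right;right; left
      exact (by decide)
    · -- k = 8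
      simp at hXv hYv
      rw [hXv] at hh
      simp at hh
      obtain ⟨ha, hY⟩ := hYv
      omega

/-! ### badness is preserved under block merges; lower bound -/

lemma bad_merge {B X Y' : List ℕ} {a : ℕ} (hb : BadTernary B) (hB : B = X ++ a :: Y')
    (hX : X ≠ []) (hh : X.head? = some a) : BadTernary (X.reverse ++ Y') := by
  obtain ⟨f, hf, hgb⟩ := hb
  have hBm : B.map f = X.map f ++ (f a) :: Y'.map f := by rw [hB]; simp
  have hXm : X.map f ≠ [] := by simp [hX]
  have hhm : (X.map f).head? = some (f a) := by rw [List.head?_map, hh]; rfl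
  obtain ⟨g, hg, hgb2⟩ := core hgb hBm hXm hhm
  refine ⟨g ∘ f, hg.comp hf, ?_⟩
  rw [← List.map_map]
  have he : (X.reverse ++ Y').map f = (X.map f).reverse ++ Y'.map f := by simp
  rw [he]
  exact hgb2

lemma length_rep (w : List ℕ) (m : ℕ) : (rep w m).length = m * w.length := by
  induction m with
  | zero => simp [rep]
  | succ k ih => rw [rep_succ]; simp [ih]; ring

lemma count_rep (x : ℕ) (w : List ℕ) (m : ℕ) : (rep w m).count x = m * w.count x := by
  induction m with
  | zero => simp [rep]
  | succ k ih => rw [rep_succ, List.count_append, ih]; ring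

lemma length_F1 (xs : List ℕ) : (F1 xs).length = 2 * xs.length := by
  induction xs with
  | nil => rfl
  | cons x t ih => rw [F1_cons]; simp [ih]; ring

lemma length_F2 (xs : List ℕ) : (F2 xs).length = 2 * xs.length := by
  induction xs with
  | nil => rfl
  | cons x t ih => rw [F2_cons]; simp [ih]; ring

lemma count2_F1 {xs : List ℕ} (h : ∀ x ∈ xs, x = 0 ∨ x = 1) :
    (F1 xs).count 2 = xs.length := by
  induction xs with
  | nil => rfl
  | cons x t ih =>
    rw [F1_cons]
    have hx := h x (List.mem_cons_self)
    have ht := ih (fun y hy => h y (List.mem_cons_of_mem _ hy))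
    rw [List.count_cons, List.count_cons, ht]
    have h2 : ¬ ((2:ℕ) = x) := by omega
    have h2' : ¬ (x = 2) := by omega
    simp [h2, h2']

lemma count2_F2 {xs : List ℕ} (h : ∀ x ∈ xs, x = 0 ∨ x = 1) :
    (F2 xs).count 2 = xs.length := by
  induction xs with
  | nil => rfl
  | cons x t ih =>
    rw [F2_cons]
    have hx := h x (List.mem_cons_self)
    have ht := ih (fun y hy => h y (List.mem_cons_of_mem _ hy))
    rw [List.count_cons, List.count_cons, ht]
    have h2 : ¬ ((2:ℕ) = x) := by omega
    have h2' : ¬ (x = 2) := by omega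
    simp [h2, h2']

lemma gbase_count2 {C : List ℕ} (h : GBaseForm C) (hlen : 3 ≤ C.length) :
    2 ≤ C.count 2 := by
  rcases h with ⟨j, hj, rfl⟩ | ⟨j, hj, rfl⟩ | ⟨xs, hne, hxs, rfl⟩ | ⟨xs, hne, hxs, rfl⟩ |
    ⟨i, j, hi, rfl⟩ | rfl | rfl | rfl | rfl | rfl | rfl | rfl | rfl
  · rw [List.count_cons, count_rep]
    norm_num
    omega
  · rw [List.count_cons, List.count_cons, count_rep]
    norm_num
    omega
  · have h1 : (F1 xs).count 2 = xs.length := count2_F1 hxs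
    have h2 := length_F1 xs
    have : 3 ≤ (F1 xs).length := hlen
    rw [show ((xs.map fun x => [x,2]).flatten) = F1 xs from rfl, h1]
    omega
  · have h1 : (F2 xs).count 2 = xs.length := count2_F2 hxs
    rw [show ((xs.map fun x => [2,x]).flatten) = F2 xs from rfl]
    rw [List.count_append, h1]
    have : xs ≠ [] := hne
    have : 1 ≤ xs.length := by
      cases xs with
      | nil => exact absurd rfl hne
      | cons c t => simp
    simp
    omega
  · rw [List.count_cons, List.count_append, List.count_cons, List.count_cons,
      count_rep, count_rep]
    norm_num
    omega
  all_goals decide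

lemma bad_not_nodup {B : List ℕ} (hb : BadTernary B) (h3 : 3 ≤ B.length)
    (hel : ∀ x ∈ B, x < 3) : ¬ B.Nodup := by
  intro hnd
  obtain ⟨f, hf, hgb⟩ := hb
  have hmap : (B.map f).Nodup :=
    hnd.map_on (fun x hx y hy hxy => hf.injOn (hel x hx) (hel y hy) hxy)
  have hlen : 3 ≤ (B.map f).length := by simpa using h3
  have hcount := gbase_count2 hgb hlen
  have := List.nodup_iff_count_le_one.1 hmap 2
  omega

/-- The main lower bound induction. -/
lemma lower_bound : ∀ (m : ℕ) (s g : List ℕ), ReachIn m s g → Grouped g →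
    (∀ x ∈ s, x < 3) → BadTernary (nrm s) → nb s ≤ m + 2 := by
  intro m
  induction m with
  | zero =>
    intro s g hr hg hel hbad
    have hsg : s = g := hr
    subst hsg
    by_contra h
    push_neg at h
    have h3 : 3 ≤ (nrm s).length := by
      have : nb s = (nrm s).length := rfl
      omega
    have hnd := grouped_nodup_nrm hg
    exact bad_not_nodup hbad h3 (fun x hx => hel x (mem_nrm.1 hx)) hnd
  | succ k ih =>
    intro s g hr hg hel hbad
    obtain ⟨u, hu, hru⟩ := hr
    by_cases hcase : nb u < nb s
    · have hle := nb_flipstep hu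
      obtain ⟨X, Y', a, hs, hXne, hhd, hnu⟩ := flip_merge hu hcase
      have hbad_u : BadTernary (nrm u) := by
        rw [hnu]; exact bad_merge hbad hs hXne hhd
      have helu : ∀ x ∈ u, x < 3 := fun x hx => hel x ((flip_perm hu).mem_iff.2 hx)
      have := ih u g hru hg helu hbad_u
      omega
    · push_neg at hcase
      have h1 := nb_reach hru
      have hgel : ∀ x ∈ g, x < 3 := fun x hx =>
        hel x (((flip_perm hu).trans (reach_perm hru)).mem_iff.2 hx)
      have h2 := nb_grouped_le hg hgel
      omega

/-! ### upper bound: grouping constructions -/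

lemma grouped_nil : Grouped [] := by
  intro i
  exact absurd i.2 (by simp)

lemma grouped_replicate (k : ℕ) (a : ℕ) : Grouped (List.replicate k a) := by
  intro i j l _ _ _
  simp only [List.get_eq_getElem, List.getElem_replicate]

lemma grouped_append_replicate {g : List ℕ} {a : ℕ} (k : ℕ) (hg : Grouped g)
    (ha : a ∉ g) : Grouped (g ++ List.replicate k a) := by
  intro i j l hij hjl hil
  simp only [List.get_eq_getElem] at *
  have hij' : (i : ℕ) < (j : ℕ) := hij
  have hjl' : (j : ℕ) < (l : ℕ) := hjl
  by_cases hl : (l : ℕ) < g.length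
  · have hi : (i : ℕ) < g.length := by omega
    have hj : (j : ℕ) < g.length := by omega
    have ei : (g ++ List.replicate k a)[(i : ℕ)] = g[(i : ℕ)]'hi := by
      rw [List.getElem_append, dif_pos hi]
    have ej : (g ++ List.replicate k a)[(j : ℕ)] = g[(j : ℕ)]'hj := by
      rw [List.getElem_append, dif_pos hj]
    have el : (g ++ List.replicate k a)[(l : ℕ)] = g[(l : ℕ)]'hl := by
      rw [List.getElem_append, dif_pos hl]
    rw [ei, el] at hil
    rw [ej, ei]
    exact hg ⟨i, hi⟩ ⟨j, hj⟩ ⟨l, hl⟩ hij' hjl' hil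
  · have hla : (g ++ List.replicate k a)[(l : ℕ)] = a := by
      rw [List.getElem_append, dif_neg hl]
      exact List.getElem_replicate _ ..
    by_cases hi : (i : ℕ) < g.length
    · exfalso
      rw [hla] at hil
      rw [List.getElem_append, dif_pos hi] at hil
      apply ha
      rw [← hil]
      exact List.getElem_mem _
    · have hj : ¬ (j : ℕ) < g.length := by omega
      have hja : (g ++ List.replicate k a)[(j : ℕ)] = a := by
        rw [List.getElem_append, dif_neg hj]
        exact List.getElem_replicate _ ..
      have hia : (g ++ List.replicate k a)[(i : ℕ)] = a := by
        rw [List.getElem_append, dif_neg hi]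
        exact List.getElem_replicate _ ..
      rw [hja, hia]

lemma exists_first_occ {v : List ℕ} {a : ℕ} (h : a ∈ v) :
    ∃ w1 w2, v = w1 ++ a :: w2 ∧ a ∉ w1 := by
  induction v with
  | nil => simp at h
  | cons c t ih =>
    by_cases hca : c = a
    · exact ⟨[], t, by rw [hca]; rfl, by simp⟩
    · have hat : a ∈ t := by
        rcases List.mem_cons.1 h with h | h
        · exact absurd h.symm hca
        · exact h
      obtain ⟨w1, w2, hv, hw1⟩ := ih hat
      refine ⟨c :: w1, w2, by rw [hv]; rfl, ?_⟩
      intro hc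
      rcases List.mem_cons.1 hc with h | h
      · exact hca h.symm
      · exact hw1 h

lemma nb_reverse (l : List ℕ) : nb l.reverse = nb l := by
  unfold nb
  rw [nrm_reverse]
  simp

lemma all_eq_of_nb_le_one {v : List ℕ} (hv : v ≠ []) (h : ∀ x ∈ v, x = v.head hv) :
    v = List.replicate v.length (v.head hv) := List.eq_replicate_of_mem h

/-- the merge-front flip -/
lemma merge_step {x w2 : List ℕ} {a : ℕ} (hx : x ≠ []) (hhead : x.head hx = a)
    (hlast : x.getLast hx ≠ a) :
    FlipStep (x ++ a :: w2) (x.reverse ++ a :: w2) ∧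
    nb (x.reverse ++ a :: w2) + 1 = nb (x ++ a :: w2) ∧ 3 ≤ nb (x ++ a :: w2) := by
  have hyne : (a :: w2 : List ℕ) ≠ [] := by simp
  have hstep : FlipStep (x ++ a :: w2) (x.reverse ++ a :: w2) := by
    refine ⟨x.length, ?_, by simp, ?_⟩
    · cases x with
      | nil => exact absurd rfl hx
      | cons c t => simp
    · unfold pflip
      rw [List.take_left, List.drop_left]
  have hhy : (a :: w2).head hyne = a := rfl
  have hrne : x.reverse ≠ [] := by simp [hx]
  have hlastrev : x.reverse.getLast hrne = x.head hx := List.getLast_reverse _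
  have hcond1 : x.getLast hx ≠ (a :: w2).head hyne := by simpa using hlast
  have hcond2 : x.reverse.getLast hrne = (a :: w2).head hyne := by
    rw [hlastrev]; simpa using hhead
  have hns : nrm (x ++ a :: w2) = nrm x ++ nrm (a :: w2) :=
    nrm_append_ne hx hyne hcond1
  have hnu : nrm (x.reverse ++ a :: w2) = nrm x.reverse ++ (nrm (a :: w2)).tail :=
    nrm_append_eq hrne hyne hcond2
  have h2x : 2 ≤ nb x :=
    one_le_of_mem_ne (hhead ▸ List.head_mem hx) (List.getLast_mem hx)
      (fun hc => hlast hc.symm)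
  have h1y : 1 ≤ nb (a :: w2) := nb_pos hyne
  have e1 : nb (x ++ a :: w2) = nb x + nb (a :: w2) := by
    unfold nb; rw [hns]; simp
  have e2 : nb (x.reverse ++ a :: w2) = nb x + (nb (a :: w2) - 1) := by
    unfold nb; rw [hnu, nrm_reverse]; simp
  exact ⟨hstep, by omega, by omega⟩

lemma head_repw1 {k : ℕ} {a : ℕ} (w1 : List ℕ) (hk : 1 ≤ k)
    (hne : (List.replicate k a ++ w1 : List ℕ) ≠ []) :
    (List.replicate k a ++ w1).head hne = a := by
  obtain ⟨k', rfl⟩ : ∃ k', k = k' + 1 := ⟨k - 1, by omega⟩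
  rw [List.head_append]
  simp

lemma getLast_repw1 {k : ℕ} {a : ℕ} {w1 : List ℕ} (hw1 : w1 ≠ [])
    (hne : (List.replicate k a ++ w1 : List ℕ) ≠ []) :
    (List.replicate k a ++ w1).getLast hne = w1.getLast hw1 := by
  rw [List.getLast_append]
  simp [hw1]

lemma head_eq_of_eq_cons {s : List ℕ} {c : ℕ} {t : List ℕ} (hne : s ≠ [])
    (hs : s = c :: t) : s.head hne = c := by subst hs; rfl

lemma takeWhile_head_ne_nil {s : List ℕ} (hne : s ≠ []) :
    s.takeWhile (fun x => x == s.head hne) ≠ [] := by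
  cases s with
  | nil => exact absurd rfl hne
  | cons c t => simp [List.takeWhile_cons]

/-- greedy grouping for strings over two symbols -/
lemma greedy_two : ∀ (N : ℕ) (s : List ℕ) (a b : ℕ), nb s ≤ N → s ≠ [] →
    (∀ x ∈ s, x = a ∨ x = b) →
    ∃ m t, ReachIn m s t ∧ Grouped t ∧ m ≤ nb s - 2 := by
  intro N
  induction N with
  | zero =>
    intro s a b hN hne _
    exact absurd hN (by have := nb_pos hne; omega)
  | succ N ih =>
    intro s a b hN hne hel
    set a' := s.head hne with ha'
    obtain ⟨k, v, hk, hsv, hvh⟩ : ∃ k v, 1 ≤ k ∧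
        s = List.replicate k a' ++ v ∧ ∀ hv : v ≠ [], v.head hv ≠ a' := by
      refine ⟨(s.takeWhile (fun x => x == a')).length, s.dropWhile (fun x => x == a'),
        ?_, ?_, ?_⟩
      · have h1 := takeWhile_head_ne_nil hne
        rw [← ha'] at h1
        have := List.length_pos_iff.2 h1
        omega
      · conv_lhs => rw [← List.takeWhile_append_dropWhile (p := fun x => x == a') (l := s)]
        congr 1
        have hall : ∀ x ∈ s.takeWhile (fun x => x == a'), x = a' := by
          intro x hx
          have := List.mem_takeWhile_imp hx
          simpa using this
        exact List.eq_replicate_of_mem hall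
      · intro hv
        have := List.head?_dropWhile_not (fun x => x == a') s
        rw [List.head?_eq_head hv] at this
        simpa using this
    by_cases hav : a' ∈ v
    · -- merge-front
      obtain ⟨w1, w2, hv, hw1⟩ := exists_first_occ hav
      have hw1ne : w1 ≠ [] := by
        intro hc
        subst hc
        rw [List.nil_append] at hv
        have hvne : v ≠ [] := by rw [hv]; simp
        exact (hvh hvne) (head_eq_of_eq_cons hvne hv)
      set x := List.replicate k a' ++ w1 with hx
      have hxne : x ≠ [] := by
        intro hc
        have := congrArg List.length hc
        simp [hx] at this
        omega
      have hsx : s = x ++ a' :: w2 := by rw [hsv, hv, hx]; simp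
      have hh : x.head hxne = a' := head_repw1 w1 hk _
      have hl : x.getLast hxne ≠ a' := by
        rw [getLast_repw1 hw1ne]
        intro hc
        exact hw1 (hc ▸ List.getLast_mem hw1ne)
      obtain ⟨hstep, hnb, hnb3⟩ := merge_step hxne hh hl
      rw [← hsx] at hstep hnb hnb3
      set u := x.reverse ++ a' :: w2 with hu
      have hune : u ≠ [] := by simp [hu]
      have huel : ∀ y ∈ u, y = a ∨ y = b := by
        intro y hy
        exact hel y ((flip_perm hstep).mem_iff.2 hy)
      obtain ⟨m', t, hr, hgt, hm'⟩ := ih u a b (by omega) hune huel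
      exact ⟨m' + 1, t, ⟨u, hstep, hr⟩, hgt, by omega⟩
    · -- already grouped
      refine ⟨0, s, rfl, ?_, by omega⟩
      by_cases hvc : v = []
      · rw [hsv, hvc, List.append_nil]
        exact grouped_replicate k a'
      · have hvne : v ≠ [] := hvc
        have hvall : ∀ x ∈ v, x = v.head hvne := by
          intro x hxv
          have hx1 := hel x (by rw [hsv]; exact List.mem_append_right _ hxv)
          have hx2 : x ≠ a' := fun hc => hav (hc ▸ hxv)
          have hh1 := hel (v.head hvne) (by rw [hsv]; exact List.mem_append_right _ (List.head_mem hvne))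
          have hh2 : v.head hvne ≠ a' := hvh hvne
          have ha'1 := hel a' (ha' ▸ List.head_mem hne)
          rcases hx1 with h | h <;> rcases hh1 with h' | h' <;> rcases ha'1 with h'' | h'' <;> omega
        rw [hsv, List.eq_replicate_of_mem hvall]
        refine grouped_append_replicate _ (grouped_replicate k a') ?_
        intro hc
        exact (hvh hvne) (List.eq_of_mem_replicate hc)

lemma head_block_decomp {s : List ℕ} (hne : s ≠ []) :
    ∃ k v, 1 ≤ k ∧ s = List.replicate k (s.head hne) ++ v ∧
      ∀ hv : v ≠ [], v.head hv ≠ s.head hne := by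
  refine ⟨(s.takeWhile (fun x => x == s.head hne)).length,
    s.dropWhile (fun x => x == s.head hne), ?_, ?_, ?_⟩
  · have h1 := takeWhile_head_ne_nil hne
    have := List.length_pos_iff.2 h1
    omega
  · conv_lhs => rw [← List.takeWhile_append_dropWhile (p := fun x => x == s.head hne) (l := s)]
    congr 1
    have hall : ∀ x ∈ s.takeWhile (fun x => x == s.head hne), x = s.head hne := by
      intro x hx
      have := List.mem_takeWhile_imp hx
      simpa using this
    exact List.eq_replicate_of_mem hall
  · intro hv
    have := List.head?_dropWhile_not (fun x => x == s.head hne) s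
    rw [List.head?_eq_head hv] at this
    simpa using this

lemma getLast_replicate {k a : ℕ} (h : (List.replicate k a : List ℕ) ≠ []) :
    (List.replicate k a).getLast h = a :=
  List.eq_of_mem_replicate (List.getLast_mem h)

/-- greedy grouping for ternary strings: at most `nb s - 2` flips suffice -/
lemma greedy_three : ∀ (N : ℕ) (s : List ℕ), nb s ≤ N → s ≠ [] →
    (∀ x ∈ s, x < 3) →
    ∃ m t, ReachIn m s t ∧ Grouped t ∧ m ≤ nb s - 2 := by
  intro N
  induction N with
  | zero =>
    intro s hN hne _
    exact absurd hN (by have := nb_pos hne; omega)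
  | succ N ih =>
    intro s hN hne hel
    obtain ⟨k, v, hk, hsv, hvh⟩ := head_block_decomp hne
    by_cases hav : s.head hne ∈ v
    · -- merge-front flip
      obtain ⟨w1, w2, hv, hw1⟩ := exists_first_occ hav
      have hw1ne : w1 ≠ [] := by
        intro hc
        subst hc
        rw [List.nil_append] at hv
        have hvne : v ≠ [] := by rw [hv]; simp
        exact (hvh hvne) (head_eq_of_eq_cons hvne hv)
      set x := List.replicate k (s.head hne) ++ w1 with hx
      have hxne : x ≠ [] := by
        intro hc
        have := congrArg List.length hc
        simp [hx] at this
        omega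
      have hsx : s = x ++ (s.head hne) :: w2 := by
        conv_lhs => rw [hsv, hv]
        rw [hx, List.append_assoc]
      have hh : x.head hxne = s.head hne := head_repw1 w1 hk _
      have hl : x.getLast hxne ≠ s.head hne := by
        rw [getLast_repw1 hw1ne]
        intro hc
        exact hw1 (hc ▸ List.getLast_mem hw1ne)
      obtain ⟨hstep, hnb, hnb3⟩ := merge_step hxne hh hl
      rw [← hsx] at hstep hnb hnb3
      set u := x.reverse ++ (s.head hne) :: w2 with hu
      have hune : u ≠ [] := by simp [hu]
      have huel : ∀ y ∈ u, y < 3 := by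
        intro y hy
        exact hel y ((flip_perm hstep).mem_iff.2 hy)
      obtain ⟨m', t, hr, hgt, hm'⟩ := ih u (by omega) hune huel
      exact ⟨m' + 1, t, ⟨u, hstep, hr⟩, hgt, by omega⟩
    · by_cases hvc : v = []
      · refine ⟨0, s, rfl, ?_, by omega⟩
        rw [hsv, hvc, List.append_nil]
        exact grouped_replicate k _
      · have hvne : v ≠ [] := hvc
        by_cases hall : ∀ x ∈ v, x = v.head hvne
        · refine ⟨0, s, rfl, ?_, by omega⟩
          rw [hsv, List.eq_replicate_of_mem hall]
          refine grouped_append_replicate _ (grouped_replicate k _) ?_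
          intro hc
          exact (hvh hvne) (List.eq_of_mem_replicate hc)
        · push_neg at hall
          obtain ⟨x0, hx0v, hx0⟩ := hall
          -- flip the whole string, then group the binary part
          have hlen1 : 1 ≤ s.length := by
            cases s with
            | nil => exact absurd rfl hne
            | cons c t => simp
          have hstep : FlipStep s s.reverse := by
            refine ⟨s.length, hlen1, le_refl _, ?_⟩
            unfold pflip
            rw [List.take_length, List.drop_length, List.append_nil]
          have hsrev : s.reverse = v.reverse ++ List.replicate k (s.head hne) := by
            conv_lhs => rw [hsv]
            rw [List.reverse_append, List.reverse_replicate]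
          have hvrne : v.reverse ≠ [] := by simp [hvne]
          have ha3 : s.head hne < 3 := hel _ (List.head_mem hne)
          have hxne3 : ∀ x ∈ v.reverse, x < 3 ∧ x ≠ s.head hne := by
            intro y hy
            have hyv : y ∈ v := List.mem_reverse.1 hy
            refine ⟨hel y (by rw [hsv]; exact List.mem_append_right _ hyv), ?_⟩
            intro hc
            exact hav (hc ▸ hyv)
          obtain ⟨b, c, hbc⟩ : ∃ b c, ∀ y ∈ v.reverse, y = b ∨ y = c := by
            have h3 : s.head hne = 0 ∨ s.head hne = 1 ∨ s.head hne = 2 := by omega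
            rcases h3 with h | h | h
            · exact ⟨1, 2, fun y hy => by have := hxne3 y hy; omega⟩
            · exact ⟨0, 2, fun y hy => by have := hxne3 y hy; omega⟩
            · exact ⟨0, 1, fun y hy => by have := hxne3 y hy; omega⟩
          obtain ⟨m', t, hrt, hgt, hm'⟩ :=
            greedy_two (nb v.reverse) v.reverse b c le_rfl hvrne hbc
          have hr2 := reach_append (List.replicate k (s.head hne)) hrt
          have hreach : ReachIn (m' + 1) s (t ++ List.replicate k (s.head hne)) := by
            refine ⟨s.reverse, hstep, ?_⟩
            rw [hsrev]
            exact hr2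
          have hgrouped : Grouped (t ++ List.replicate k (s.head hne)) := by
            refine grouped_append_replicate _ hgt ?_
            intro hc
            have : s.head hne ∈ v.reverse := (reach_perm hrt).mem_iff.2 hc
            exact hav (List.mem_reverse.1 this)
          refine ⟨m' + 1, t ++ List.replicate k (s.head hne), hreach, hgrouped, ?_⟩
          have h2v : 2 ≤ nb v :=
            one_le_of_mem_ne hx0v (List.head_mem hvne) hx0
          have hnbvr : nb v.reverse = nb v := nb_reverse v
          have hrepne : (List.replicate k (s.head hne) : List ℕ) ≠ [] := by
            simp
            omega
          have hnbs : nb s = 1 + nb v := by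
            have hcond : (List.replicate k (s.head hne)).getLast hrepne ≠ v.head hvne := by
              rw [getLast_replicate]
              exact fun hc => (hvh hvne) hc.symm
            have := nrm_append_ne hrepne hvne hcond
            rw [hsv]
            unfold nb
            rw [this, nrm_replicate hk]
            simp
            omega
          omega

theorem grouping_bad_ternary' (n : ℕ) (s : List ℕ)
    (hlen : s.length = n) (hfull : FullyKary 3 s) (hnorm : Normalized s)
    (hbad : BadTernary s) :
    groupDist s = n - 2 := by
  have hel : ∀ x ∈ s, x < 3 := fun x hx => (hfull x).1 hx
  have hne : s ≠ [] := by
    intro hc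
    have := (hfull 0).2 (by norm_num)
    rw [hc] at this
    simp at this
  have hnrm : nrm s = s := nrm_of_chain' hnorm
  have hnb : nb s = n := by unfold nb; rw [hnrm, hlen]
  obtain ⟨m0, t0, hr0, hg0, hm0⟩ := greedy_three (nb s) s le_rfl hne hel
  have hub : groupDist s ≤ n - 2 := by
    have h1 : groupDist s ≤ m0 :=
      Nat.sInf_le (show m0 ∈ {m | ∃ t, Grouped t ∧ ReachIn m s t} from ⟨t0, hg0, hr0⟩)
    omega
  have hlb : n - 2 ≤ groupDist s := by
    apply le_csInf ⟨m0, (show ∃ t, Grouped t ∧ ReachIn m0 s t from ⟨t0, hg0, hr0⟩)⟩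
    intro m hm
    obtain ⟨t, hgt, hrt⟩ := hm
    have := lower_bound m s t hrt hgt hel (by rw [hnrm]; exact hbad)
    omega
  omega


theorem grouping_bad_ternary (n : ℕ) (s : List ℕ)
    (hlen : s.length = n) (hfull : FullyKary 3 s) (hnorm : Normalized s)
    (hbad : BadTernary s) :
    groupDist s = n - 2 :=
  grouping_bad_ternary' n s hlen hfull hnorm hbad
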